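/- arXiv:2003.12906 — 2 statements merged into one kernel-verified Lean document; each statement's English description precedes it below -/
import Mathlib

section
/- The weighted average aggregation of finitely many non-standard probability assignments is a non-standard probability assignment: if p₁, …, p_n each satisfy normalization (0 ≤ p_i^±(φ) ≤ 1), monotonicity, and import-export (p_i^±(φ∧ψ) + p_i^±(φ∨ψ) = p_i^±(φ) + p_i^±(ψ)), and w₁, …, w_n ∈ [0,1] with ∑w_i > 0, then WA(φ) := (∑ w_i p_i⁺(φ) / ∑ w_i, ∑ w_i p_i⁻(φ) / ∑ w_i) also satisfies normalization, monotonicity, and import-export. -/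
/-- Formulas of Belnap–Dunn logic over atoms `A`. -/
inductive BDForm (A : Type) where
  | atom : A → BDForm A
  | and : BDForm A → BDForm A → BDForm A
  | or  : BDForm A → BDForm A → BDForm A
  | neg : BDForm A → BDForm A

/-- Double-valuation support: `(sup vp vn φ w).1` is positive support,
`(sup vp vn φ w).2` is negative support. -/
def BDForm.sup {A W : Type} (vp vn : W → A → Bool) : BDForm A → W → Bool × Bool
  | .atom a, w => (vp w a, vn w a)
  | .and φ ψ, w => ((sup vp vn φ w).1 && (sup vp vn ψ w).1,
                    (sup vp vn φ w).2 || (sup vp vn ψ w).2)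
  | .or φ ψ, w => ((sup vp vn φ w).1 || (sup vp vn ψ w).1,
                   (sup vp vn φ w).2 && (sup vp vn ψ w).2)
  | .neg φ, w => ((sup vp vn φ w).2, (sup vp vn φ w).1)

/-- Positive probability of a formula w.r.t. a mass function. -/
noncomputable def pPlus {A W : Type} [Fintype W] (m : W → ℝ)
    (vp vn : W → A → Bool) (φ : BDForm A) : ℝ :=
  ∑ w ∈ Finset.univ.filter (fun w => (BDForm.sup vp vn φ w).1 = true), m w

/-- Negative probability of a formula w.r.t. a mass function. -/
noncomputable def pMinus {A W : Type} [Fintype W] (m : W → ℝ)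
    (vp vn : W → A → Bool) (φ : BDForm A) : ℝ :=
  ∑ w ∈ Finset.univ.filter (fun w => (BDForm.sup vp vn φ w).2 = true), m w

/-- Semantic BD entailment: preservation of positive support in every
double-valuation model. -/
def BDEnt {A : Type} (φ ψ : BDForm A) : Prop :=
  ∀ (W : Type) (vp vn : W → A → Bool) (w : W),
    (BDForm.sup vp vn φ w).1 = true → (BDForm.sup vp vn ψ w).1 = true

/-- A non-standard probability assignment: normalization (A1),
monotonicity (A2), and import-export (A3). -/
def NSProb {A : Type} (p : BDForm A → ℝ × ℝ) : Prop :=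
  (∀ φ, (p φ).1 ∈ Set.Icc (0:ℝ) 1 ∧ (p φ).2 ∈ Set.Icc (0:ℝ) 1) ∧
  (∀ φ ψ, BDEnt φ ψ → (p φ).1 ≤ (p ψ).1 ∧ (p ψ).2 ≤ (p φ).2) ∧
  (∀ φ ψ, (p (.and φ ψ)).1 + (p (.or φ ψ)).1 = (p φ).1 + (p ψ).1 ∧
          (p (.and φ ψ)).2 + (p (.or φ ψ)).2 = (p φ).2 + (p ψ).2)

/-- Weighted average of non-standard probability assignments is a
non-standard probability assignment. -/
theorem weighted_average_NSProb {A : Type} (n : ℕ)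
    (p : Fin n → BDForm A → ℝ × ℝ) (w : Fin n → ℝ)
    (hp : ∀ i, NSProb (p i)) (hw : ∀ i, w i ∈ Set.Icc (0:ℝ) 1)
    (hsum : 0 < ∑ i, w i) :
    NSProb (fun φ =>
      ((∑ i, w i * (p i φ).1) / (∑ i, w i),
       (∑ i, w i * (p i φ).2) / (∑ i, w i))) := by
  have hS : (0:ℝ) < ∑ i, w i := hsum
  have hw0 : ∀ i, 0 ≤ w i := fun i => (hw i).1
  refine ⟨fun φ => ?_, fun φ ψ h => ?_, fun φ ψ => ?_⟩
  · constructor <;> constructor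
    · exact div_nonneg (Finset.sum_nonneg fun i _ =>
        mul_nonneg (hw0 i) ((hp i).1 φ).1.1) hS.le
    · rw [div_le_one hS]
      exact Finset.sum_le_sum fun i _ => by
        nlinarith [((hp i).1 φ).1.2, hw0 i, ((hp i).1 φ).1.1]
    · exact div_nonneg (Finset.sum_nonneg fun i _ =>
        mul_nonneg (hw0 i) ((hp i).1 φ).2.1) hS.le
    · rw [div_le_one hS]
      exact Finset.sum_le_sum fun i _ => by
        nlinarith [((hp i).1 φ).2.2, hw0 i, ((hp i).1 φ).2.1]
  · constructor <;> rw [div_le_div_iff₀ hS hS, mul_comm, mul_comm _ (∑ i, w i),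
      mul_le_mul_iff_right₀ hS] <;>
    exact Finset.sum_le_sum fun i _ => by
      rcases (hp i).2.1 φ ψ h with ⟨h1, h2⟩
      nlinarith [hw0 i]
  · constructor <;>
    · rw [← add_div, ← add_div, ← Finset.sum_add_distrib,
        ← Finset.sum_add_distrib]
      congr 1
      apply Finset.sum_congr rfl
      intro i _
      have := (hp i).2.2 φ ψ
      first
      | rw [← mul_add, ← mul_add, this.1]
      | rw [← mul_add, ← mul_add, this.2]
end

section
/- There exist non-standard probability assignments p₁, p₂ (each satisfying normalization, monotonicity, and import-export) on Belnap–Dunn formulas such that the Min aggregation Min(φ) := (min(p₁⁺(φ), p₂⁺(φ)), min(p₁⁻(φ), p₂⁻(φ))) violates the import-export axiom, i.e., Min⁺(φ∧ψ) + Min⁺(φ∨ψ) ≠ Min⁺(φ) + Min⁺(ψ) for some formulas φ, ψ. -/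
/-- Complemented-model lemma. -/
lemma sup_compl {A W : Type} (vp vn : W → A → Bool) (χ : BDForm A) (w : W) :
    BDForm.sup (fun w a => !vn w a) (fun w a => !vp w a) χ w
      = (!(BDForm.sup vp vn χ w).2, !(BDForm.sup vp vn χ w).1) := by
  induction χ with
  | atom a => rfl
  | and φ ψ ihφ ihψ => simp [BDForm.sup, ihφ, ihψ]
  | or φ ψ ihφ ihψ => simp [BDForm.sup, ihφ, ihψ]
  | neg φ ih => simp [BDForm.sup, ih]

/-- Contraposition for negative support. -/
lemma BDEnt_neg {A W : Type} {φ ψ : BDForm A} (h : BDEnt φ ψ)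
    (vp vn : W → A → Bool) (w : W)
    (hs : (BDForm.sup vp vn ψ w).2 = true) : (BDForm.sup vp vn φ w).2 = true := by
  by_contra hc
  have h1 : (BDForm.sup (fun w a => !vn w a) (fun w a => !vp w a) φ w).1 = true := by
    rw [sup_compl]; simpa using hc
  have h2 := h W _ _ w h1
  rw [sup_compl] at h2
  simp [hs] at h2

noncomputable def pOf (vp : Unit → ℕ → Bool) : BDForm ℕ → ℝ × ℝ :=
  fun φ => (pPlus (fun _ => 1) vp (fun _ _ => false) φ,
            pMinus (fun _ => 1) vp (fun _ _ => false) φ)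

lemma pPlus_unit (vp vn : Unit → ℕ → Bool) (φ : BDForm ℕ) :
    pPlus (fun _ => (1:ℝ)) vp vn φ
      = if (BDForm.sup vp vn φ ()).1 = true then 1 else 0 := by
  simp [pPlus, Finset.sum_filter, Finset.filter_singleton]
  split_ifs <;> simp

lemma pMinus_unit (vp vn : Unit → ℕ → Bool) (φ : BDForm ℕ) :
    pMinus (fun _ => (1:ℝ)) vp vn φ
      = if (BDForm.sup vp vn φ ()).2 = true then 1 else 0 := by
  simp [pMinus, Finset.sum_filter, Finset.filter_singleton]
  split_ifs <;> simp

lemma ite_and_or (a b : Bool) :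
    ((if (a && b) = true then (1:ℝ) else 0) + if (a || b) = true then 1 else 0)
      = (if a = true then 1 else 0) + if b = true then 1 else 0 := by
  cases a <;> cases b <;> simp

lemma ite_or_and (a b : Bool) :
    ((if (a || b) = true then (1:ℝ) else 0) + if (a && b) = true then 1 else 0)
      = (if a = true then 1 else 0) + if b = true then 1 else 0 := by
  cases a <;> cases b <;> simp

lemma NSProb_pOf (vp : Unit → ℕ → Bool) : NSProb (pOf vp) := by
  refine ⟨fun φ => ?_, fun φ ψ h => ?_, fun φ ψ => ?_⟩
  · simp only [pOf, pPlus_unit, pMinus_unit]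
    constructor <;> constructor <;> split_ifs <;> norm_num
  · simp only [pOf, pPlus_unit, pMinus_unit]
    constructor
    · split_ifs with h1 h2 <;> try norm_num
      exact absurd (h Unit _ _ () h1) h2
    · split_ifs with h1 h2 <;> try norm_num
      exact absurd (BDEnt_neg h _ _ () h1) h2
  · simp only [pOf, pPlus_unit, pMinus_unit, BDForm.sup]
    exact ⟨ite_and_or _ _, ite_or_and _ _⟩

/-- Min aggregation of two non-standard probability assignments may violate
the import-export axiom. -/
theorem min_aggregation_not_NSProb :
    ∃ p₁ p₂ : BDForm ℕ → ℝ × ℝ, NSProb p₁ ∧ NSProb p₂ ∧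
      ∃ φ ψ : BDForm ℕ,
        min (p₁ (.and φ ψ)).1 (p₂ (.and φ ψ)).1 +
          min (p₁ (.or φ ψ)).1 (p₂ (.or φ ψ)).1 ≠
        min (p₁ φ).1 (p₂ φ).1 + min (p₁ ψ).1 (p₂ ψ).1 := by
  refine ⟨pOf (fun _ a => a == 0), pOf (fun _ a => a == 1),
    NSProb_pOf _, NSProb_pOf _, .atom 0, .atom 1, ?_⟩
  simp only [pOf, pPlus_unit, BDForm.sup]
  norm_num
end
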